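/- Under Assumptions A1 and A2, for each MSP j with c̃ⱼ + V·tⱼ(0) < p₀ + V·t̄₀, the first-order condition −((p − c̃ⱼ)/V)·(tⱼ⁻¹)'((p₀ − p)/V + t̄₀) + tⱼ⁻¹((p₀ − p)/V + t̄₀) = 0 has a unique solution p* in the interval [c̃ⱼ, p₀ + V·(t̄₀ − tⱼ(0))], and p* is the unique maximizer of Uⱼ(p) = (p − c̃ⱼ)·tⱼ⁻¹((p₀ − p)/V + t̄₀) on that interval. -/

import Mathlib

/-- Under A1 and A2, if c̃ + V·t(0) < p₀ + V·t̄₀, the first-order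
condition has a unique solution p* in [c̃, p₀ + V(t̄₀ − t(0))], and p* is the
unique maximizer of the MSP profit U(p) = (p − c̃)·t⁻¹((p₀ − p)/V + t̄₀) there. -/
theorem stmt_8
    (V p0 p0max tbar ctil : ℝ)
    (hV : 0 < V) (hctil : 0 ≤ ctil) (htbar : 0 ≤ tbar)
    (hp0 : p0 ∈ Set.Icc (0 : ℝ) p0max)
    (t tinv : ℝ → ℝ)
    -- Assumption A1
    (ht_conv : ConvexOn ℝ Set.univ t)
    (ht_strict : StrictMono t)
    (ht_smooth : ContDiff ℝ 2 t)
    -- tinv is the (differentiable) inverse of t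
    (htinv_left : ∀ z, tinv (t z) = z)
    (htinv_right : ∀ y, t (tinv y) = y)
    (htinv_diff : Differentiable ℝ tinv)
    -- Assumption A2 (single-provider form)
    (hA2 : tinv (p0max / V + tbar) ≤ 1)
    -- the provider is competitive
    (hcomp : ctil + V * t 0 < p0 + V * tbar)
    -- the profit and the first-order condition
    (U F : ℝ → ℝ)
    (hU : ∀ p, U p = (p - ctil) * tinv ((p0 - p) / V + tbar))
    (hF : ∀ p, F p = -((p - ctil) / V) * deriv tinv ((p0 - p) / V + tbar)
      + tinv ((p0 - p) / V + tbar)) :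
    ∃ pstar ∈ Set.Icc ctil (p0 + V * (tbar - t 0)),
      F pstar = 0 ∧
      (∀ p ∈ Set.Icc ctil (p0 + V * (tbar - t 0)), F p = 0 → p = pstar) ∧
      (∀ p ∈ Set.Icc ctil (p0 + V * (tbar - t 0)), U p ≤ U pstar) ∧
      (∀ p ∈ Set.Icc ctil (p0 + V * (tbar - t 0)), U p = U pstar → p = pstar) := by
  set b : ℝ := p0 + V * (tbar - t 0) with hbdef
  have hVne : V ≠ 0 := ne_of_gt hV
  have hcb : ctil < b := by
    have : ctil < p0 + V * (tbar - t 0) := by nlinarith [hcomp]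
    simpa [hbdef] using this
  have ht_diff : Differentiable ℝ t := ht_smooth.differentiable (by norm_num)
  -- tinv is strictly monotone
  have htinv_mono : StrictMono tinv := by
    intro a c hac
    by_contra hle
    push_neg at hle
    have h1 : t (tinv c) ≤ t (tinv a) := ht_strict.monotone hle
    rw [htinv_right, htinv_right] at h1
    exact absurd hac (not_lt.2 h1)
  -- chain rule identity
  have hchain : ∀ y, deriv t (tinv y) * deriv tinv y = 1 := by
    intro y
    have h1 : HasDerivAt (t ∘ tinv) (deriv t (tinv y) * deriv tinv y) y :=
      (ht_diff (tinv y)).hasDerivAt.comp y (htinv_diff y).hasDerivAt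
    have h2 : t ∘ tinv = id := funext fun y => htinv_right y
    rw [h2] at h1
    exact h1.unique (hasDerivAt_id y)
  -- deriv tinv is nonnegative
  have htinv_d_nonneg : ∀ y, 0 ≤ deriv tinv y := by
    intro y
    have h := (htinv_diff y).hasDerivAt
    rw [hasDerivAt_iff_tendsto_slope] at h
    refine ge_of_tendsto h ?_
    filter_upwards [self_mem_nhdsWithin] with x hx
    have hx' : x ≠ y := hx
    rcases lt_or_gt_of_ne hx' with h1 | h1
    · rw [slope_def_field, div_nonneg_iff]
      right
      constructor
      · simpa using (htinv_mono.monotone h1.le)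
      · linarith
    · rw [slope_def_field, div_nonneg_iff]
      left
      constructor
      · simpa using (htinv_mono.monotone h1.le)
      · linarith
  have htinv_d_pos : ∀ y, 0 < deriv tinv y := by
    intro y
    rcases eq_or_lt_of_le (htinv_d_nonneg y) with h | h
    · exfalso
      have := hchain y
      rw [← h] at this
      simp at this
    · exact h
  have htd_pos : ∀ y, 0 < deriv t (tinv y) := by
    intro y
    have h := hchain y
    nlinarith [htinv_d_pos y]
  -- formula for deriv tinv
  have htinv_d_eq : ∀ y, deriv tinv y = (deriv t (tinv y))⁻¹ := by
    intro y
    have hne : deriv t (tinv y) ≠ 0 := ne_of_gt (htd_pos y)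
    field_simp
    linear_combination hchain y
  -- deriv t is monotone
  have htd_mono : Monotone (deriv t) := by
    exact monotoneOn_univ.1 (ht_conv.monotoneOn_deriv (fun x _ => ht_diff x))
  -- deriv tinv is antitone
  have htinv_d_anti : Antitone (deriv tinv) := by
    intro y1 y2 h12
    rw [htinv_d_eq y1, htinv_d_eq y2]
    have h1 : deriv t (tinv y1) ≤ deriv t (tinv y2) :=
      htd_mono (htinv_mono.monotone h12)
    have h2 := htd_pos y1
    gcongr
  -- the argument function
  have hargb : (p0 - b) / V + tbar = t 0 := by
    field_simp [hbdef]
    ring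
  have harg_anti : ∀ p1 p2 : ℝ, p1 < p2 → (p0 - p2) / V + tbar < (p0 - p1) / V + tbar := by
    intro p1 p2 h
    have h2 : p0 - p2 < p0 - p1 := by linarith
    gcongr
  -- F is strictly antitone on [ctil, ∞)
  have hFanti : StrictAntiOn F (Set.Ici ctil) := by
    intro p1 h1 p2 h2 h12
    rw [hF p1, hF p2]
    have ha := harg_anti p1 p2 h12
    have hg : tinv ((p0 - p2) / V + tbar) < tinv ((p0 - p1) / V + tbar) := htinv_mono ha
    have hd : deriv tinv ((p0 - p1) / V + tbar) ≤ deriv tinv ((p0 - p2) / V + tbar) :=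
      htinv_d_anti ha.le
    have hd1 : 0 < deriv tinv ((p0 - p1) / V + tbar) := htinv_d_pos _
    have hc1 : ctil ≤ p1 := h1
    have hc2 : ctil ≤ p2 := h2
    have hm : (p1 - ctil) / V * deriv tinv ((p0 - p1) / V + tbar)
        ≤ (p2 - ctil) / V * deriv tinv ((p0 - p2) / V + tbar) := by
      apply mul_le_mul ?_ hd hd1.le (div_nonneg (by linarith) hV.le)
      gcongr <;> linarith
    linarith
  -- F at the endpoints
  have hargc : t 0 < (p0 - ctil) / V + tbar := by
    rw [← sub_lt_iff_lt_add, lt_div_iff₀ hV]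
    nlinarith [hcomp]
  have htinv0 : tinv (t 0) = 0 := htinv_left 0
  have hFc : 0 < F ctil := by
    rw [hF ctil]
    have h1 : 0 < tinv ((p0 - ctil) / V + tbar) := by
      rw [← htinv0]
      exact htinv_mono hargc
    simp only [sub_self, zero_div, neg_zero, zero_mul]
    linarith
  have hFb : F b < 0 := by
    rw [hF b, hargb, htinv0]
    have h1 : 0 < (b - ctil) / V := div_pos (by linarith) hV
    have h2 := htinv_d_pos (t 0)
    nlinarith
  -- continuity of F
  have htdc : Continuous (deriv t) := ht_smooth.continuous_deriv (by norm_num)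
  have hFeq : F = fun p => -((p - ctil) / V) * (deriv t (tinv ((p0 - p) / V + tbar)))⁻¹
      + tinv ((p0 - p) / V + tbar) := by
    funext p
    rw [hF p, htinv_d_eq]
  have hFcont : Continuous F := by
    rw [hFeq]
    have harg_cont : Continuous fun p : ℝ => (p0 - p) / V + tbar := by continuity
    have h1 : Continuous fun p : ℝ => (deriv t (tinv ((p0 - p) / V + tbar)))⁻¹ := by
      apply Continuous.inv₀
      · exact htdc.comp (htinv_diff.continuous.comp harg_cont)
      · intro x
        exact ne_of_gt (htd_pos _)
    exact (((continuous_id.sub continuous_const).div_const V).neg.mul h1).add (htinv_diff.continuous.comp harg_cont)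
  -- existence of the zero
  have hivt := intermediate_value_Icc' hcb.le hFcont.continuousOn
  have h0mem : (0 : ℝ) ∈ Set.Icc (F b) (F ctil) := ⟨hFb.le, hFc.le⟩
  obtain ⟨pstar, hpsmem, hFps⟩ := hivt h0mem
  -- derivative of U
  have hUD : ∀ p, HasDerivAt U (F p) p := by
    intro p
    have h1 : HasDerivAt (fun q : ℝ => (p0 - q) / V + tbar) (-1 / V) p :=
      (((hasDerivAt_id p).const_sub p0).div_const V).add_const tbar
    have h2 : HasDerivAt (fun q : ℝ => tinv ((p0 - q) / V + tbar))
        (deriv tinv ((p0 - p) / V + tbar) * (-1 / V)) p :=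
      (htinv_diff _).hasDerivAt.comp p h1
    have h3 : HasDerivAt (fun q : ℝ => q - ctil) 1 p := (hasDerivAt_id p).sub_const ctil
    have h4 := h3.mul h2
    have hUeq : U = fun q => (q - ctil) * tinv ((p0 - q) / V + tbar) := funext hU
    rw [hUeq]
    have h5 : F p = 1 * tinv ((p0 - p) / V + tbar) + (p - ctil) * (deriv tinv ((p0 - p) / V + tbar) * (-1 / V)) := by
      rw [hF p]
      ring
    rw [h5]
    exact h4
  have hUdiff : Differentiable ℝ U := fun x => (hUD x).differentiableAt
  -- U is strictly monotone left of pstar, strictly antitone right of pstar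
  have hmono : StrictMonoOn U (Set.Icc ctil pstar) := by
    apply strictMonoOn_of_deriv_pos (convex_Icc _ _) hUdiff.continuous.continuousOn
    intro x hx
    rw [interior_Icc] at hx
    rw [(hUD x).deriv]
    have hlt : F pstar < F x := hFanti (Set.mem_Ici.mpr hx.1.le) (Set.mem_Ici.mpr hpsmem.1) hx.2
    rw [hFps] at hlt
    linarith
  have hanti : StrictAntiOn U (Set.Icc pstar b) := by
    apply strictAntiOn_of_deriv_neg (convex_Icc _ _) hUdiff.continuous.continuousOn
    intro x hx
    rw [interior_Icc] at hx
    rw [(hUD x).deriv]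
    have hlt : F x < F pstar := hFanti (Set.mem_Ici.mpr hpsmem.1) (Set.mem_Ici.mpr (hpsmem.1.trans hx.1.le)) hx.1
    rw [hFps] at hlt
    linarith
  refine ⟨pstar, hpsmem, hFps, ?_, ?_, ?_⟩
  · intro p hp hFp
    have := hFanti.injOn (Set.mem_Ici.mpr hp.1) (Set.mem_Ici.mpr hpsmem.1)
    exact this (by rw [hFp, hFps])
  · intro p hp
    rcases lt_trichotomy p pstar with h | h | h
    · exact (hmono ⟨hp.1, h.le⟩ ⟨hpsmem.1, le_refl _⟩ h).le
    · exact h ▸ le_refl _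
    · exact (hanti ⟨le_refl _, hpsmem.2⟩ ⟨h.le, hp.2⟩ h).le
  · intro p hp hUp
    rcases lt_trichotomy p pstar with h | h | h
    · exact absurd hUp (ne_of_lt (hmono ⟨hp.1, h.le⟩ ⟨hpsmem.1, le_refl _⟩ h))
    · exact h
    · exact absurd hUp (ne_of_lt (hanti ⟨le_refl _, hpsmem.2⟩ ⟨h.le, hp.2⟩ h))
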